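/- Let ĥ ~ CN(0, ω) be a scalar circularly symmetric complex Gaussian with variance ω > 0, and a, b ≥ 0 with a > b. Then E[ln((1 + a|ĥ|²)/(1 + b|ĥ|²))] = e^{1/(ωa)}E₁(1/(ωa)) − e^{1/(ωb)}E₁(1/(ωb)), with the convention that the second term is 0 when b = 0. -/

import Mathlib

open MeasureTheory ProbabilityTheory
open scoped Topology ENNReal NNReal

/-- The exponential integral `E₁(z) = ∫₁^∞ e^{−zu}/u du`. -/
noncomputable def expIntE1 (z : ℝ) : ℝ := ∫ u in Set.Ioi (1 : ℝ), Real.exp (-z * u) / u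

open Set Filter Real in
lemma aux_translate (f : ℝ → ℝ) :
    ∫ x in Set.Ioi (1:ℝ), f x = ∫ x in Set.Ioi (0:ℝ), f (x + 1) := by
  rw [← integral_indicator measurableSet_Ioi, ← integral_indicator measurableSet_Ioi,
    ← integral_add_right_eq_self (fun x => (Set.Ioi (1:ℝ)).indicator f x) 1]
  congr 1
  ext x
  by_cases h : 0 < x
  · rw [Set.indicator_of_mem (by simpa using h), Set.indicator_of_mem (by simpa using h)]
  · rw [Set.indicator_of_notMem (by simpa using h), Set.indicator_of_notMem (by simpa using h)]

open Set Filter Real in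
lemma integrableOn_id_mul_exp {lam : ℝ} (hlam : 0 < lam) :
    IntegrableOn (fun x => x * Real.exp (-lam * x)) (Set.Ioi (0:ℝ)) := by
  have h := integrableOn_rpow_mul_exp_neg_mul_rpow (s := 1) (p := 1)
    (by norm_num) zero_lt_one hlam
  refine h.congr_fun (fun x hx => ?_) measurableSet_Ioi
  simp [Real.rpow_one]

open Set Filter Real in
lemma integrableOn_log_mul_exp {lam c : ℝ} (hlam : 0 < lam) (hc : 0 ≤ c) :
    IntegrableOn (fun x => Real.log (1 + c*x) * (lam * Real.exp (-lam * x)))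
      (Set.Ioi (0:ℝ)) := by
  refine Integrable.mono' (((integrableOn_id_mul_exp hlam).const_mul (c * lam))) ?_ ?_
  · refine ContinuousOn.aestronglyMeasurable ?_ measurableSet_Ioi
    refine ContinuousOn.mul (ContinuousOn.log (by fun_prop) ?_) (by fun_prop)
    intro x hx
    have : (0:ℝ) < x := hx
    nlinarith
  · filter_upwards [ae_restrict_mem measurableSet_Ioi] with x hx
    have hx0 : (0:ℝ) < x := hx
    have hpos : (0:ℝ) < 1 + c*x := by nlinarith
    have h1 : 0 ≤ Real.log (1 + c*x) := Real.log_nonneg (by nlinarith)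
    have h2 : Real.log (1 + c*x) ≤ c * x := by
      have := Real.log_le_sub_one_of_pos hpos
      linarith
    have he : (0:ℝ) < Real.exp (-lam * x) := Real.exp_pos _
    rw [Real.norm_eq_abs, abs_of_nonneg (by positivity)]
    calc Real.log (1 + c*x) * (lam * Real.exp (-lam * x))
        ≤ (c*x) * (lam * Real.exp (-lam * x)) :=
          mul_le_mul_of_nonneg_right h2 (by positivity)
      _ = c * lam * (x * Real.exp (-lam * x)) := by ring

open Set Filter Real in
lemma integrableOn_exp_div {lam c : ℝ} (hlam : 0 < lam) (hc : 0 ≤ c) :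
    IntegrableOn (fun x => c / (1 + c*x) * Real.exp (-lam * x)) (Set.Ioi (0:ℝ)) := by
  refine Integrable.mono' ((exp_neg_integrableOn_Ioi 0 hlam).const_mul c) ?_ ?_
  · refine ContinuousOn.aestronglyMeasurable ?_ measurableSet_Ioi
    refine ContinuousOn.mul (ContinuousOn.div continuousOn_const (by fun_prop) ?_) (by fun_prop)
    intro x hx
    have : (0:ℝ) < x := hx
    nlinarith
  · filter_upwards [ae_restrict_mem measurableSet_Ioi] with x hx
    have hx0 : (0:ℝ) < x := hx
    have hpos : (0:ℝ) < 1 + c*x := by nlinarith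
    have he : (0:ℝ) < Real.exp (-lam * x) := Real.exp_pos _
    have h1 : c / (1 + c*x) ≤ c := by
      rw [div_le_iff₀ hpos]
      nlinarith [mul_nonneg (mul_nonneg hc hc) hx0.le]
    have h0 : 0 ≤ c / (1 + c*x) := div_nonneg hc hpos.le
    rw [Real.norm_eq_abs, abs_of_nonneg (by positivity)]
    nlinarith

open Set Filter Real in
lemma integrableOn_E1 {z : ℝ} (hz : 0 < z) :
    IntegrableOn (fun u => Real.exp (-z*u) / u) (Set.Ioi (1:ℝ)) := by
  refine Integrable.mono' (exp_neg_integrableOn_Ioi 1 hz) ?_ ?_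
  · refine ContinuousOn.aestronglyMeasurable ?_ measurableSet_Ioi
    refine ContinuousOn.div (by fun_prop) (by fun_prop) ?_
    intro x hx
    have : (1:ℝ) < x := hx
    linarith
  · filter_upwards [ae_restrict_mem measurableSet_Ioi] with u hu
    have hu1 : (1:ℝ) < u := hu
    have he : (0:ℝ) < Real.exp (-z * u) := Real.exp_pos _
    rw [Real.norm_eq_abs, abs_of_nonneg (by positivity)]
    rw [div_le_iff₀ (by linarith)]
    nlinarith

open Set Filter Real in
lemma tendsto_log_mul_exp {lam c : ℝ} (hlam : 0 < lam) (hc : 0 ≤ c) :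
    Tendsto (fun x => Real.log (1 + c*x) * Real.exp (-lam * x)) atTop (𝓝 0) := by
  have h := tendsto_rpow_mul_exp_neg_mul_atTop_nhds_zero 1 lam hlam
  simp_rw [Real.rpow_one] at h
  have h' : Tendsto (fun x : ℝ => c * (x * Real.exp (-lam * x))) atTop (𝓝 0) := by
    simpa using h.const_mul c
  refine tendsto_of_tendsto_of_tendsto_of_le_of_le' tendsto_const_nhds h' ?_ ?_
  · filter_upwards [eventually_gt_atTop 0] with x hx
    have hpos : (0:ℝ) < 1 + c*x := by nlinarith
    have h1 : 0 ≤ Real.log (1 + c*x) := Real.log_nonneg (by nlinarith)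
    positivity
  · filter_upwards [eventually_gt_atTop 0] with x hx
    have hpos : (0:ℝ) < 1 + c*x := by nlinarith
    have h2 : Real.log (1 + c*x) ≤ c * x := by
      have := Real.log_le_sub_one_of_pos hpos
      linarith
    have he : (0:ℝ) < Real.exp (-lam * x) := Real.exp_pos _
    calc Real.log (1 + c*x) * Real.exp (-lam * x)
        ≤ (c*x) * Real.exp (-lam * x) :=
          mul_le_mul_of_nonneg_right h2 (Real.exp_pos _).le
      _ = c * (x * Real.exp (-lam * x)) := by ring

open Set Filter Real in
lemma key_integral {lam c : ℝ} (hlam : 0 < lam) (hc : 0 < c) :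
    ∫ x in Set.Ioi (0:ℝ), Real.log (1 + c*x) * (lam * Real.exp (-lam * x)) =
      Real.exp (lam/c) * expIntE1 (lam/c) := by
  set z := lam / c with hzdef
  have hz0 : 0 < z := div_pos hlam hc
  have hzc : z * c = lam := by rw [hzdef, div_mul_cancel₀ _ hc.ne']
  -- Step B : the rational integral equals exp z * E₁ z
  have hJ : ∫ x in Set.Ioi (0:ℝ), c / (1 + c*x) * Real.exp (-lam*x)
      = Real.exp z * expIntE1 z := by
    have trans : expIntE1 z = ∫ x in Set.Ioi (0:ℝ), Real.exp (-z*(x+1))/(x+1) :=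
      aux_translate _
    have scale := integral_comp_mul_left_Ioi
      (fun u => Real.exp (-z*(u+1))/(u+1)) 0 hc
    rw [mul_zero] at scale
    have heq : ∀ x ∈ Set.Ioi (0:ℝ),
        Real.exp (-z*(c*x+1))/(c*x+1) =
          Real.exp (-z) * (c⁻¹ * (c / (1 + c*x) * Real.exp (-lam*x))) := by
      intro x hx
      have hx0 : (0:ℝ) < x := hx
      have hpos : (0:ℝ) < 1 + c*x := by nlinarith
      have harg : -z*(c*x+1) = -lam*x + (-z) := by
        rw [← hzc]; ring
      rw [harg, Real.exp_add]
      field_simp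
      ring
    rw [setIntegral_congr_fun measurableSet_Ioi heq] at scale
    rw [integral_const_mul, integral_const_mul] at scale
    rw [trans]
    set J := ∫ x in Set.Ioi (0:ℝ), c / (1 + c*x) * Real.exp (-lam*x) with hJdef
    set E := ∫ x in Set.Ioi (0:ℝ), Real.exp (-z*(x+1))/(x+1) with hEdef
    have h1 : Real.exp (-z) * (c⁻¹ * J) = c⁻¹ * E := by
      simpa [smul_eq_mul] using scale
    have hL : c * Real.exp z * (Real.exp (-z) * (c⁻¹ * J)) = J := by
      rw [Real.exp_neg]
      field_simp
    have hR : c * Real.exp z * (c⁻¹ * E) = Real.exp z * E := by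
      field_simp
    rw [← hL, h1, hR]
  -- Step A : integration by parts
  set F : ℝ → ℝ := fun x => -(Real.log (1 + c*x) * Real.exp (-lam*x)) with hF
  set F' : ℝ → ℝ := fun x =>
    Real.log (1 + c*x) * (lam * Real.exp (-lam*x)) - c/(1+c*x) * Real.exp (-lam*x) with hF'
  have hderiv : ∀ x ∈ Set.Ioi (0:ℝ), HasDerivAt F (F' x) x := by
    intro x hx
    have hx0 : (0:ℝ) < x := hx
    have hpos : (0:ℝ) < 1 + c*x := by nlinarith
    have h1 : HasDerivAt (fun x : ℝ => 1 + c*x) c x := by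
      simpa using (hasDerivAt_id x).const_mul c |>.const_add 1
    have h2 : HasDerivAt (fun x : ℝ => Real.log (1 + c*x)) (c/(1+c*x)) x :=
      h1.log hpos.ne'
    have h3 : HasDerivAt (fun x : ℝ => Real.exp (-lam*x)) (-lam * Real.exp (-lam*x)) x := by
      have h := ((hasDerivAt_id x).const_mul (-lam)).exp
      simp only [id_eq] at h
      convert h using 1
      ring
    have := (h2.mul h3).neg
    refine this.congr_deriv ?_
    show _ = Real.log (1 + c*x) * (lam * Real.exp (-lam*x)) - c/(1+c*x) * Real.exp (-lam*x)
    ring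
  have hcont : ContinuousWithinAt F (Set.Ici (0:ℝ)) 0 := by
    apply ContinuousAt.continuousWithinAt
    have harg : ContinuousAt (fun x : ℝ => 1 + c*x) 0 := by fun_prop
    have hlog : ContinuousAt (fun x : ℝ => Real.log (1 + c*x)) 0 :=
      (Real.continuousAt_log (by norm_num)).comp harg
    have hexp : ContinuousAt (fun x : ℝ => Real.exp (-lam*x)) 0 := by fun_prop
    exact (hlog.mul hexp).neg
  have hInt1 := integrableOn_log_mul_exp hlam hc.le
  have hInt2 := integrableOn_exp_div hlam hc.le
  have hIntF' : IntegrableOn F' (Set.Ioi (0:ℝ)) := hInt1.sub hInt2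
  have htend : Tendsto F atTop (𝓝 0) := by
    have h := (tendsto_log_mul_exp hlam hc.le).neg
    rw [neg_zero] at h
    exact h
  have hIBP := integral_Ioi_of_hasDerivAt_of_tendsto hcont hderiv hIntF' htend
  have hF0 : F 0 = 0 := by simp [hF]
  rw [hF0, sub_zero] at hIBP
  have hsplit : ∫ x in Set.Ioi (0:ℝ), F' x =
      (∫ x in Set.Ioi (0:ℝ), Real.log (1 + c*x) * (lam * Real.exp (-lam*x))) -
        ∫ x in Set.Ioi (0:ℝ), c/(1+c*x) * Real.exp (-lam*x) :=
    integral_sub hInt1 hInt2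
  rw [hsplit] at hIBP
  rw [sub_eq_zero] at hIBP
  rw [hIBP, hJ]

lemma expIntE1_zero : expIntE1 0 = 0 := by
  unfold expIntE1
  apply integral_undef
  intro h
  have h' : MeasureTheory.IntegrableOn (fun u : ℝ => Real.exp (-0*u)/u) (Set.Ioi (1:ℝ)) := h
  have : MeasureTheory.IntegrableOn (fun u : ℝ => u⁻¹) (Set.Ioi (1:ℝ)) :=
    h'.congr_fun (fun x hx => by simp) measurableSet_Ioi
  exact not_IntegrableOn_Ioi_inv this

open Set Filter Real in
/-- For `ĥ ~ CN(0,ω)` scalar (so that `|ĥ|²` is exponentially distributed with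
mean `ω`) and `a > b ≥ 0`,
`E[ln((1 + a|ĥ|²)/(1 + b|ĥ|²))] = e^{1/(ωa)}E₁(1/(ωa)) − e^{1/(ωb)}E₁(1/(ωb))`
(the second term being `0` when `b = 0`, which holds automatically here since
`1/0 = 0` and `E₁(0)`'s defining integral diverges, giving value `0`). -/
theorem cn_log_ratio_expectation
    {Ω : Type*} [MeasurableSpace Ω] (μ : Measure Ω) [IsProbabilityMeasure μ]
    (hhat : Ω → ℂ) (w a b : ℝ) (hw : 0 < w) (hb : 0 ≤ b) (hab : b < a)
    (hlaw : MeasureTheory.Measure.map (fun ω => Complex.normSq (hhat ω)) μ =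
      expMeasure (1 / w)) :
    ∫ ω, Real.log ((1 + a * Complex.normSq (hhat ω)) /
        (1 + b * Complex.normSq (hhat ω))) ∂μ =
      Real.exp (1 / (w * a)) * expIntE1 (1 / (w * a)) -
        Real.exp (1 / (w * b)) * expIntE1 (1 / (w * b)) := by
  set r := 1 / w with hr
  have hr0 : 0 < r := by positivity
  have ha : 0 < a := lt_of_le_of_lt hb hab
  set X : Ω → ℝ := fun ω => Complex.normSq (hhat ω) with hX
  set g : ℝ → ℝ := fun x => Real.log ((1 + a * x) / (1 + b * x)) with hg
  -- X is a.e. measurable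
  have hXm : AEMeasurable X μ := by
    by_contra h
    rw [Measure.map_of_not_aemeasurable h] at hlaw
    have h1 : (expMeasure r) Set.univ = 1 :=
      (isProbabilityMeasure_expMeasure hr0).measure_univ
    rw [← hlaw] at h1
    simp at h1
  have hgm : Measurable g := by
    apply Real.measurable_log.comp
    fun_prop
  -- rewrite expectation as an integral against the exponential measure
  have step1 : ∫ ω, g (X ω) ∂μ = ∫ x, g x ∂(expMeasure r) := by
    rw [← hlaw, integral_map hXm hgm.aestronglyMeasurable]
  -- the density
  set D : ℝ → ℝ := gammaPDFReal 1 r with hD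
  have hDnn : ∀ x, 0 ≤ D x := gammaPDFReal_nonneg one_pos hr0
  have step2 : ∫ x, g x ∂(expMeasure r) = ∫ x, D x * g x := by
    have : expMeasure r = volume.withDensity (fun x => ((D x).toNNReal : ℝ≥0∞)) := by
      rfl
    rw [this, integral_withDensity_eq_integral_smul
      ((measurable_gammaPDFReal 1 r).real_toNNReal) g]
    congr 1
    ext x
    rw [NNReal.smul_def, smul_eq_mul, Real.coe_toNNReal _ (hDnn x)]
  have hDval : ∀ x : ℝ, 0 ≤ x → D x = r * Real.exp (-r * x) := by
    intro x hx
    simp only [hD, gammaPDFReal, if_pos hx, Real.rpow_one, sub_self, Real.rpow_zero,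
      Real.Gamma_one, neg_mul]
    ring
  have step3 : ∫ x, D x * g x = ∫ x in Set.Ioi (0:ℝ), D x * g x := by
    symm
    apply setIntegral_eq_integral_of_forall_compl_eq_zero
    intro x hx
    simp only [Set.mem_Ioi, not_lt] at hx
    rcases lt_or_eq_of_le hx with h | h
    · simp [hD, gammaPDFReal, if_neg (not_le.mpr h)]
    · subst h
      simp [hg]
  have step4 : ∫ x in Set.Ioi (0:ℝ), D x * g x =
      (∫ x in Set.Ioi (0:ℝ), Real.log (1 + a*x) * (r * Real.exp (-r * x))) -
        ∫ x in Set.Ioi (0:ℝ), Real.log (1 + b*x) * (r * Real.exp (-r * x)) := by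
    rw [← integral_sub (integrableOn_log_mul_exp hr0 ha.le)
      (integrableOn_log_mul_exp hr0 hb)]
    apply setIntegral_congr_fun measurableSet_Ioi
    intro x hx
    show D x * g x = Real.log (1 + a*x) * (r * Real.exp (-r * x)) -
      Real.log (1 + b*x) * (r * Real.exp (-r * x))
    have hx0 : (0:ℝ) < x := hx
    have hpa : (0:ℝ) < 1 + a*x := by nlinarith
    have hpb : (0:ℝ) < 1 + b*x := by nlinarith
    rw [hDval x hx0.le]
    simp only [hg]
    rw [Real.log_div hpa.ne' hpb.ne']
    ring
  have hKa : ∫ x in Set.Ioi (0:ℝ), Real.log (1 + a*x) * (r * Real.exp (-r * x)) =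
      Real.exp (1 / (w * a)) * expIntE1 (1 / (w * a)) := by
    have := key_integral hr0 ha
    rwa [hr, div_div] at this
  have hKb : ∫ x in Set.Ioi (0:ℝ), Real.log (1 + b*x) * (r * Real.exp (-r * x)) =
      Real.exp (1 / (w * b)) * expIntE1 (1 / (w * b)) := by
    rcases lt_or_eq_of_le hb with hb0 | hb0
    · have := key_integral hr0 hb0
      rwa [hr, div_div] at this
    · rw [← hb0]
      simp [expIntE1_zero]
  calc ∫ ω, Real.log ((1 + a * Complex.normSq (hhat ω)) /
        (1 + b * Complex.normSq (hhat ω))) ∂μ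
      = ∫ ω, g (X ω) ∂μ := rfl
    _ = ∫ x, g x ∂(expMeasure r) := step1
    _ = ∫ x, D x * g x := step2
    _ = ∫ x in Set.Ioi (0:ℝ), D x * g x := step3
    _ = _ := by rw [step4, hKa, hKb]
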